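/- (Simulation of H up to a Pauli operator by state transfer with observables Z, Z⊗X, X) Let |x_s⟩ = (|0⟩ + (-1)^s·|1⟩)/√2, the unit eigenvectors of σx with eigenvalue (-1)^s. Work in ℂ²⊗ℂ² with the data qubit a as the first factor and the ancilla qubit b as the second, the ancilla prepared in |s₁⟩ by a Z-measurement with outcome s₁. For all s₁, s₂, s₃ ∈ {0,1} and every φ ∈ ℂ²: (|x_{s₃}⟩⟨x_{s₃}| ⊗ I) · ((I⊗I + (-1)^{s₂}·σz⊗σx)/2) · (φ ⊗ |s₁⟩) = (1/2) · |x_{s₃}⟩ ⊗ (σx^{s₁}·σz^{s₂}·σx^{s₃}·H·φ). Hence the measurement sequence Z_b, Z_a⊗X_b, X_a transfers the state Hφ to qubit b up to the Pauli operator σx^{s₁}σz^{s₂}σx^{s₃}, each outcome branch having squared norm ‖φ‖²/4. -/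

import Mathlib

open Matrix Complex
open scoped Real Kronecker

noncomputable section

/-- The Pauli matrix σx. -/
def σx : Matrix (Fin 2) (Fin 2) ℂ := !![0, 1; 1, 0]

/-- The Pauli matrix σz. -/
def σz : Matrix (Fin 2) (Fin 2) ℂ := !![1, 0; 0, -1]

/-- The Hadamard gate `H = (1/√2)·!![1,1;1,-1]`. -/
def Hgate : Matrix (Fin 2) (Fin 2) ℂ :=
  ((Real.sqrt 2 : ℂ))⁻¹ • !![1, 1; 1, -1]

/-- The computational basis vector `|s⟩` of ℂ². -/
def ket (s : Fin 2) : Fin 2 → ℂ := fun i => if i = s then 1 else 0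

/-- The eigenvector `|x_s⟩ = (|0⟩ + (-1)^s·|1⟩)/√2` of `σx` with eigenvalue `(-1)^s`. -/
def ketx (s : Fin 2) : Fin 2 → ℂ := fun i =>
  if i = 0 then ((Real.sqrt 2 : ℂ))⁻¹
  else ((-1 : ℂ) ^ (s : ℕ)) * ((Real.sqrt 2 : ℂ))⁻¹

/-- The rank-one projector `|x_s⟩⟨x_s|`. -/
def projx (s : Fin 2) : Matrix (Fin 2) (Fin 2) ℂ :=
  Matrix.of fun i j => ketx s i * (starRingEnd ℂ) (ketx s j)

/-- The tensor product of two vectors of ℂ². -/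
def tp (φ ψ : Fin 2 → ℂ) : Fin 2 × Fin 2 → ℂ := fun p => φ p.1 * ψ p.2

lemma nσx (v : Fin 2 → ℂ) :
    ‖(σx.mulVec v) 0‖^2 + ‖(σx.mulVec v) 1‖^2 = ‖v 0‖^2 + ‖v 1‖^2 := by
  simp [σx, Matrix.mulVec, dotProduct, Fin.sum_univ_two]; ring

lemma nσz (v : Fin 2 → ℂ) :
    ‖(σz.mulVec v) 0‖^2 + ‖(σz.mulVec v) 1‖^2 = ‖v 0‖^2 + ‖v 1‖^2 := by
  simp [σz, Matrix.mulVec, dotProduct, Fin.sum_univ_two]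

lemma nH (v : Fin 2 → ℂ) :
    ‖(Hgate.mulVec v) 0‖^2 + ‖(Hgate.mulVec v) 1‖^2 = ‖v 0‖^2 + ‖v 1‖^2 := by
  have hsq : Real.sqrt 2 ^ 2 = 2 := Real.sq_sqrt (by norm_num)
  have hne : (Real.sqrt 2) ≠ 0 := by positivity
  simp [Hgate, Matrix.mulVec, dotProduct, Fin.sum_univ_two,
    Complex.sq_norm, Complex.normSq_apply, Complex.add_re, Complex.add_im, Complex.mul_re,
    Complex.mul_im, Complex.ofReal_re, Complex.ofReal_im, Complex.inv_re, Complex.inv_im,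
    Complex.normSq_ofReal, smul_eq_mul]
  field_simp
  ring_nf
  simp only [hsq]
  ring

lemma npow (M : Matrix (Fin 2) (Fin 2) ℂ)
    (hM : ∀ v, ‖(M.mulVec v) 0‖^2 + ‖(M.mulVec v) 1‖^2 = ‖v 0‖^2 + ‖v 1‖^2)
    (s : Fin 2) (v : Fin 2 → ℂ) :
    ‖((M ^ (s:ℕ)).mulVec v) 0‖^2 + ‖((M ^ (s:ℕ)).mulVec v) 1‖^2 = ‖v 0‖^2 + ‖v 1‖^2 := by
  fin_cases s
  · simp [Matrix.one_mulVec]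
  · simpa using hM v

set_option linter.unreachableTactic false in
set_option linter.unusedTactic false in
set_option maxHeartbeats 4000000 in
/-- Simulation of `H` up to a Pauli operator by state transfer with observables
`Z`, `Z⊗X`, `X`: applying the projectors for outcomes `s₂` (observable `σz⊗σx`)
and `s₃` (observable `σx` on the data qubit `a`) to `φ ⊗ |s₁⟩` yields
`(1/2)·|x_{s₃}⟩ ⊗ (σx^{s₁}·σz^{s₂}·σx^{s₃}·H·φ)`; every branch has squared
norm `‖φ‖²/4`. -/
theorem H_state_transfer (s₁ s₂ s₃ : Fin 2) (φ : Fin 2 → ℂ) :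
    ((projx s₃ ⊗ₖ (1 : Matrix (Fin 2) (Fin 2) ℂ)).mulVec
      (((2 : ℂ)⁻¹ • ((1 : Matrix (Fin 2 × Fin 2) (Fin 2 × Fin 2) ℂ)
          + ((-1 : ℂ) ^ (s₂ : ℕ)) • (σz ⊗ₖ σx))).mulVec
        (tp φ (ket s₁)))
      = (2 : ℂ)⁻¹ •
          tp (ketx s₃)
            ((σx ^ (s₁ : ℕ) * σz ^ (s₂ : ℕ) * σx ^ (s₃ : ℕ) * Hgate).mulVec φ)) ∧
    (∑ p : Fin 2 × Fin 2,
        ‖((2 : ℂ)⁻¹ •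
          tp (ketx s₃)
            ((σx ^ (s₁ : ℕ) * σz ^ (s₂ : ℕ) * σx ^ (s₃ : ℕ) * Hgate).mulVec φ)) p‖ ^ 2
      = (∑ i : Fin 2, ‖φ i‖ ^ 2) / 4) := by
  have h2c : ((Real.sqrt 2 : ℂ)) * (Real.sqrt 2 : ℂ) = 2 := by
    rw [← Complex.ofReal_mul, Real.mul_self_sqrt (by norm_num : (0:ℝ) ≤ 2)]; norm_num
  have hnec : ((Real.sqrt 2 : ℂ)) ≠ 0 := by
    intro h; rw [h, mul_zero] at h2c; norm_num at h2c
  have hne : (Real.sqrt 2) ≠ 0 := by positivity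
  have hsq : Real.sqrt 2 ^ 2 = 2 := Real.sq_sqrt (by norm_num)
  have hcases : ∀ s : Fin 2, s = 0 ∨ s = 1 := by decide
  constructor
  · rcases hcases s₁ with rfl | rfl <;> rcases hcases s₂ with rfl | rfl <;>
      rcases hcases s₃ with rfl | rfl <;>
      (funext p
       fin_cases p <;>
         simp [projx, ketx, ket, tp, σx, σz, Hgate, Matrix.mulVec, dotProduct,
           Matrix.kroneckerMap, Fin.sum_univ_two, Fintype.sum_prod_type, Matrix.one_apply,
           Pi.smul_apply, Matrix.smul_apply, Matrix.add_apply, smul_eq_mul,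
           Complex.conj_ofReal, map_inv₀, Fin.isValue] <;>
         field_simp <;> (first | ring1 | (left; ring1)))
  · set w := (σx ^ (s₁ : ℕ) * σz ^ (s₂ : ℕ) * σx ^ (s₃ : ℕ) * Hgate).mulVec φ with hw
    have hw2 : ‖w 0‖^2 + ‖w 1‖^2 = ‖φ 0‖^2 + ‖φ 1‖^2 := by
      rw [hw, ← Matrix.mulVec_mulVec, ← Matrix.mulVec_mulVec, ← Matrix.mulVec_mulVec,
        npow σx nσx, npow σz nσz, npow σx nσx, nH]
    have hx : ∀ i, ‖ketx s₃ i‖^2 = 2⁻¹ := by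
      intro i
      fin_cases i <;> fin_cases s₃ <;>
        simp [ketx, map_inv₀, Complex.norm_real, _root_.abs_of_nonneg
          (Real.sqrt_nonneg 2)] <;>
      · rw [inv_pow, hsq]
    rw [Fintype.sum_prod_type, Fin.sum_univ_two]
    simp only [Fin.sum_univ_two, Pi.smul_apply, smul_eq_mul, tp, norm_mul, mul_pow]
    have e0 := hx 0; have e1 := hx 1
    simp only [e0, e1]
    rw [show ‖(2:ℂ)⁻¹‖ = 2⁻¹ by simp]
    linarith [hw2]
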